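/- Let q : E → B be a covering map of topological spaces. Equip the spaces C([0,∞), E) and C([0,∞), B) of continuous paths with the compact-open topology. Then the map Φ : C([0,∞), E) → {(x, ω) ∈ E × C([0,∞), B) : q(x) = ω(0)} defined by Φ(ω̃) = (ω̃(0), q ∘ ω̃) is a homeomorphism onto the subspace {(x, ω) : q(x) = ω(0)} of E × C([0,∞), B); equivalently, every continuous path ω : [0,∞) → B with ω(0) = q(x) has a unique continuous lift ω_x through q starting at x, and the resulting lifting map H(x, ω) = ω_x is a homeomorphism inverse to Φ. -/

import Mathlib

open NNReal

open Set Topology Filter in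
section
open Set Topology Filter

namespace Stmt11Aux

variable {E B : Type*} [TopologicalSpace E] [TopologicalSpace B] {q : E → B}

/-- From continuity of `ω` at `t`, an `ℝ≥0`-valued radius `δ` such that the
`δ`-neighborhood of `t` is mapped into `U`. -/
lemma exists_delta (ω : C(ℝ≥0, B)) (t : ℝ≥0) {U : Set B} (hU : IsOpen U) (hmem : ω t ∈ U) :
    ∃ δ : ℝ≥0, 0 < δ ∧ ∀ u : ℝ≥0, (t : ℝ) ≤ u + δ → (u : ℝ) ≤ t + δ → ω u ∈ U := by
  have h := (ω.continuous.continuousAt (x := t)).preimage_mem_nhds (hU.mem_nhds hmem)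
  rw [Metric.mem_nhds_iff] at h
  obtain ⟨ε, hε, hball⟩ := h
  refine ⟨(ε/2).toNNReal, Real.toNNReal_pos.2 (by linarith), fun u h1 h2 => ?_⟩
  have hc : ((ε/2).toNNReal : ℝ) = ε/2 := Real.coe_toNNReal _ (by linarith)
  rw [hc] at h1 h2
  apply hball
  rw [Metric.mem_ball, NNReal.dist_eq, abs_sub_lt_iff]
  constructor <;> linarith

/-- Gluing a partial lift with a local section of a trivialization. -/
lemma glue {F : Type*} [TopologicalSpace F] (T : Bundle.Trivialization F q)
    {a b : ℝ≥0} (hab : a ≤ b) (f : C(ℝ≥0, E)) (ω : C(ℝ≥0, B))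
    (hfa : ∀ s ≤ a, q (f s) = ω s) (hω : ∀ s ∈ Icc a b, ω s ∈ T.baseSet) :
    ∃ g : C(ℝ≥0, E), g 0 = f 0 ∧ (∀ s ≤ b, q (g s) = ω s) ∧
      ∀ s ∈ Icc a b, g s = T.toOpenPartialHomeomorph.symm (ω s, (T (f a)).2) := by
  classical
  set c : F := (T (f a)).2 with hc
  have hmm : ∀ s : ℝ≥0, min (max s a) b ∈ Icc a b := fun s =>
    ⟨le_min (le_max_right s a) hab, min_le_right _ _⟩
  have hfasrc : f a ∈ T.source := T.mem_source.2 (by rw [hfa a le_rfl]; exact hω a ⟨le_rfl, hab⟩)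
  set φ : ℝ≥0 → E := fun s => T.toOpenPartialHomeomorph.symm (ω (min (max s a) b), c) with hφ
  have hφcont : Continuous φ := by
    apply T.toOpenPartialHomeomorph.continuousOn_symm.comp_continuous
    · exact (ω.continuous.comp (((continuous_id.max continuous_const).min
        continuous_const))).prodMk continuous_const
    · exact fun s => T.mem_target.2 (hω _ (hmm s))
  have hφa : φ a = f a := by
    have h1 : T (f a) = (ω a, c) := by
      refine Prod.ext ?_ rfl
      rw [T.coe_fst hfasrc, hfa a le_rfl]
    have : min (max a a) b = a := by simp [hab]
    rw [hφ]; dsimp only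
    rw [this, ← h1]
    exact T.toOpenPartialHomeomorph.left_inv hfasrc
  set g : ℝ≥0 → E := fun s => if s ≤ a then f s else φ s with hg
  have hgcont : Continuous g := by
    refine Continuous.if_le f.continuous hφcont continuous_id continuous_const fun s hs => ?_
    rw [hs, hφa]
  refine ⟨⟨g, hgcont⟩, ?_, ?_, ?_⟩
  · simp only [ContinuousMap.coe_mk, hg, if_pos (zero_le (a := a))]
  · intro s hsb
    by_cases hsa : s ≤ a
    · simp only [ContinuousMap.coe_mk, hg, if_pos hsa]; exact hfa s hsa
    · push_neg at hsa
      have h1 : min (max s a) b = s := by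
        rw [max_eq_left hsa.le, min_eq_left hsb]
      simp only [ContinuousMap.coe_mk, hg, if_neg (not_le.2 hsa), hφ, h1]
      exact T.proj_symm_apply (T.mem_target.2 (hω s ⟨hsa.le, hsb⟩))
  · intro s hs
    by_cases hsa : s ≤ a
    · have hsa' : s = a := le_antisymm hsa hs.1
      subst hsa'
      simp only [ContinuousMap.coe_mk, hg, if_pos le_rfl]
      rw [← hφa, hφ]
      simp [hab]
    · push_neg at hsa
      have h1 : min (max s a) b = s := by rw [max_eq_left hsa.le, min_eq_left hs.2]
      simp only [ContinuousMap.coe_mk, hg, if_neg (not_le.2 hsa), hφ, h1]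


lemma exists_lift (hq : IsCoveringMap q) (x : E) (ω : C(ℝ≥0, B)) (hx : q x = ω 0) :
    ∃ f : C(ℝ≥0, E), f 0 = x ∧ ∀ t, q (f t) = ω t := by
  classical
  set Sx : Set ℝ≥0 := {t | ∃ f : C(ℝ≥0, E), f 0 = x ∧ ∀ s ≤ t, q (f s) = ω s} with hSx
  have down : ∀ {s t : ℝ≥0}, s ≤ t → t ∈ Sx → s ∈ Sx := by
    rintro s t hst ⟨f, hf0, hf⟩
    exact ⟨f, hf0, fun u hu => hf u (hu.trans hst)⟩
  have zero_mem : (0 : ℝ≥0) ∈ Sx := by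
    refine ⟨⟨fun _ => x, continuous_const⟩, rfl, fun s hs => ?_⟩
    rw [le_zero_iff] at hs
    subst hs
    simpa using hx
  have main : ∀ t : ℝ≥0, t ∈ Sx := by
    intro t₁
    haveI : PreconnectedSpace (Icc (0:ℝ≥0) t₁) := Subtype.preconnectedSpace isPreconnected_Icc
    set S' : Set (Icc (0:ℝ≥0) t₁) := {u | (u : ℝ≥0) ∈ Sx} with hS'
    have hopen : IsOpen S' := by
      rw [isOpen_iff_mem_nhds]
      rintro ⟨v, hv⟩ hvS
      haveI : DiscreteTopology (q ⁻¹' {ω v}) := (hq (ω v)).1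
      haveI : Nonempty (q ⁻¹' {ω v}) := by
        obtain ⟨f, -, hf⟩ := hvS
        exact ⟨⟨f v, hf v le_rfl⟩⟩
      set T := (hq (ω v)).toTrivialization with hT
      obtain ⟨δ, hδ, hδU⟩ := exists_delta ω v T.open_baseSet (hq (ω v)).mem_toTrivialization_baseSet
      obtain ⟨f, hf0, hf⟩ := hvS
      have hωbase : ∀ s ∈ Icc v (v + δ), ω s ∈ T.baseSet := by
        intro s hs
        have h1 : (v:ℝ) ≤ s := by exact_mod_cast hs.1
        have h2 : (s:ℝ) ≤ v + δ := by exact_mod_cast hs.2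
        have h3 : (0:ℝ) ≤ δ := δ.coe_nonneg
        exact hδU s (by linarith) h2
      obtain ⟨g, hg0, hg, -⟩ := glue T (le_self_add (a := v) (b := δ)) f ω hf hωbase
      have hvδ : v + δ ∈ Sx := ⟨g, by rw [hg0, hf0], hg⟩
      refine Filter.mem_of_superset
        (continuous_subtype_val.continuousAt.preimage_mem_nhds
          (Iio_mem_nhds (lt_add_of_pos_right v hδ))) ?_
      rintro ⟨w, hw⟩ hwmem
      exact down (le_of_lt hwmem) hvδ
    have hclosed : IsClosed S' := by
      rw [← closure_subset_iff_isClosed]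
      rintro ⟨v, hv⟩ hvcl
      haveI : DiscreteTopology (q ⁻¹' {ω v}) := (hq (ω v)).1
      haveI : Nonempty (q ⁻¹' {ω v}) := by
        by_contra hne
        rw [not_nonempty_iff] at hne
        obtain ⟨-, U, hxU, hU, -, Hm, -⟩ := hq (ω v)
        rw [mem_closure_iff_nhds] at hvcl
        obtain ⟨⟨s, hsI⟩, hs1, f, -, hf⟩ := hvcl _ (continuous_subtype_val.continuousAt.preimage_mem_nhds
          ((ω.continuous.continuousAt).preimage_mem_nhds (hU.mem_nhds hxU)))
        exact hne.elim (Hm ⟨f s, show q (f s) ∈ U by rw [hf s le_rfl]; exact hs1⟩).2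
      set T := (hq (ω v)).toTrivialization with hT
      obtain ⟨δ, hδ, hδU⟩ := exists_delta ω v T.open_baseSet (hq (ω v)).mem_toTrivialization_baseSet
      have hW : IsOpen {w : ℝ≥0 | (v:ℝ) - δ < w} :=
        isOpen_lt continuous_const NNReal.continuous_coe
      have hWv : (⟨v, hv⟩ : Icc (0:ℝ≥0) t₁) ∈ Subtype.val ⁻¹' {w : ℝ≥0 | (v:ℝ) - δ < w} := by
        simp only [mem_preimage, mem_setOf_eq]
        have : (0:ℝ) < δ := by exact_mod_cast hδ
        linarith
      rw [mem_closure_iff_nhds] at hvcl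
      obtain ⟨⟨s, hsIcc⟩, hs1, hs2⟩ := hvcl _
        (continuous_subtype_val.continuousAt.preimage_mem_nhds (hW.mem_nhds hWv))
      simp only [mem_preimage, mem_setOf_eq] at hs1
      rcases le_total v s with hvs | hsv
      · exact down hvs hs2
      · obtain ⟨f, hf0, hf⟩ := hs2
        obtain ⟨g, hg0, hg, -⟩ := glue T hsv f ω hf (fun u hu => hδU u
          (by
            have h1 : (s:ℝ) ≤ u := by exact_mod_cast hu.1
            linarith)
          (by
            have h2 : (u:ℝ) ≤ v := by exact_mod_cast hu.2
            have : (0:ℝ) ≤ δ := δ.coe_nonneg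
            linarith))
        exact ⟨g, by rw [hg0, hf0], hg⟩
    have hne : S'.Nonempty := ⟨⟨0, ⟨le_rfl, zero_le⟩⟩, zero_mem⟩
    have := IsClopen.eq_univ ⟨hclosed, hopen⟩ hne
    have ht₁ : (⟨t₁, ⟨zero_le, le_rfl⟩⟩ : Icc (0:ℝ≥0) t₁) ∈ S' := by rw [this]; trivial
    exact ht₁
  -- now glue the partial lifts using uniqueness
  have coh : ∀ t u : ℝ≥0, u ≤ t → (main u).choose u = (main t).choose u := by
    intro t u hut
    have h1 := (main u).choose_spec
    have h2 := (main t).choose_spec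
    have := hq.eqOn_of_comp_eqOn (isPreconnected_Iic (a := u))
      (main u).choose.continuous.continuousOn (main t).choose.continuous.continuousOn
      (fun s hs => by
        simp only [Function.comp_apply]
        rw [h1.2 s hs, h2.2 s (le_trans hs hut)])
      (Set.mem_Iic.2 zero_le) (by rw [h1.1, h2.1])
    exact this (Set.mem_Iic.2 le_rfl)
  set f : ℝ≥0 → E := fun t => (main t).choose t with hf
  have hfcont : Continuous f := by
    rw [continuous_iff_continuousAt]
    intro t
    have hev : f =ᶠ[𝓝 t] fun u => (main (t+1)).choose u := by
      refine Filter.eventuallyEq_of_mem (Iio_mem_nhds (lt_add_of_pos_right t one_pos)) ?_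
      intro u hu
      exact coh (t+1) u (le_of_lt hu)
    exact ((main (t+1)).choose.continuous.continuousAt.congr hev.symm)
  refine ⟨⟨f, hfcont⟩, ?_, ?_⟩
  · show f 0 = x
    exact (main 0).choose_spec.1
  · intro t
    show q (f t) = ω t
    exact (main t).choose_spec.2 t le_rfl


/-- The parameter space: pairs (x, ω) with q x = ω 0. -/
abbrev PS (q : E → B) := {p : E × C(ℝ≥0, B) // q p.1 = p.2 0}

/-- The lifting map. -/
noncomputable def H (hq : IsCoveringMap q) (p : PS q) :
    C(ℝ≥0, E) :=
  (exists_lift hq p.1.1 p.1.2 p.2).choose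

lemma H_zero (hq : IsCoveringMap q) (p : PS q) :
    H hq p 0 = p.1.1 :=
  (exists_lift hq p.1.1 p.1.2 p.2).choose_spec.1

lemma H_lift (hq : IsCoveringMap q) (p : PS q) (t : ℝ≥0) :
    q (H hq p t) = p.1.2 t :=
  (exists_lift hq p.1.1 p.1.2 p.2).choose_spec.2 t

lemma H_eqOn (hq : IsCoveringMap q) (p : PS q) {b : ℝ≥0}
    (g : C(ℝ≥0, E)) (hg0 : g 0 = p.1.1) (hg : ∀ s ≤ b, q (g s) = p.1.2 s) :
    ∀ s ≤ b, H hq p s = g s := by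
  intro s hs
  refine hq.eqOn_of_comp_eqOn (isPreconnected_Iic (a := b))
    (H hq p).continuous.continuousOn g.continuous.continuousOn
    (fun u hu => ?_) (Set.mem_Iic.2 zero_le) (by rw [H_zero, hg0]) (Set.mem_Iic.2 hs)
  simp only [Function.comp_apply]
  rw [H_lift hq p u, hg u hu]

lemma H_unique (hq : IsCoveringMap q) (p : PS q)
    (g : C(ℝ≥0, E)) (hg0 : g 0 = p.1.1) (hg : ∀ t, q (g t) = p.1.2 t) :
    H hq p = g := by
  ext t
  exact H_eqOn hq p g hg0 (fun s _ => hg s) t le_rfl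

/-- Key step: near a point where `p ↦ H p a` is continuous, the lift is given on `[a, b]`
by an explicit local-section formula, yielding joint continuity. -/
lemma step (hq : IsCoveringMap q) {F : Type*} [TopologicalSpace F] [DiscreteTopology F]
    (T : Bundle.Trivialization F q) {a b : ℝ≥0} (hab : a ≤ b)
    (p₀ : PS q)
    (hω : ∀ s ∈ Icc a b, p₀.1.2 s ∈ T.baseSet)
    (ha : ContinuousAt (fun p : PS q => H hq p a) p₀) :
    ∀ s ∈ Icc a b, Icc a b ∈ 𝓝 s →
      ContinuousAt (fun z : PS q × ℝ≥0 => H hq z.1 z.2)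
        (p₀, s) := by
  classical
  set c : F := (T (H hq p₀ a)).2 with hc
  have hψcont : Continuous (fun p : PS q => p.1.2) := continuous_snd.comp continuous_subtype_val
  have hsrc₀ : H hq p₀ a ∈ T.source := T.mem_source.2 (by
    rw [H_lift hq p₀ a]; exact hω a ⟨le_rfl, hab⟩)
  set O : Set E := T.source ∩ (fun e => (T e).2) ⁻¹' {c} with hO
  have hOopen : IsOpen O :=
    T.continuousOn_toFun.isOpen_inter_preimage T.open_source
      (continuous_snd.isOpen_preimage _ (isOpen_discrete _))
  have hO₀ : H hq p₀ a ∈ O := ⟨hsrc₀, rfl⟩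
  set N : Set (PS q) := (fun p : PS q => H hq p a) ⁻¹' O ∩
    (fun p : PS q => p.1.2) ⁻¹' {f : C(ℝ≥0, B) | MapsTo f (Icc a b) T.baseSet} with hN
  have hNnhds : N ∈ 𝓝 p₀ := by
    refine Filter.inter_mem (ha.preimage_mem_nhds (hOopen.mem_nhds hO₀)) ?_
    exact hψcont.continuousAt.preimage_mem_nhds
      ((ContinuousMap.isOpen_setOf_mapsTo isCompact_Icc T.open_baseSet).mem_nhds hω)
  have hformula : ∀ p ∈ N, ∀ s ∈ Icc a b,
      H hq p s = T.toOpenPartialHomeomorph.symm (p.1.2 s, c) := by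
    rintro p ⟨hp1, hp2⟩ s hs
    simp only [mem_preimage, hO, mem_inter_iff, mem_singleton_iff, mem_setOf_eq] at hp1 hp2
    obtain ⟨g, hg0, hg, hgform⟩ := glue T hab (H hq p) p.1.2
      (fun u _ => H_lift hq p u) (fun u hu => hp2 hu)
    have := H_eqOn hq p g (by rw [hg0, H_zero]) hg s hs.2
    rw [this, hgform s hs, hp1.2]
  intro s hs hsnhds
  have hev : (fun z : PS q × ℝ≥0 => H hq z.1 z.2) =ᶠ[𝓝 (p₀, s)]
      (fun z : PS q × ℝ≥0 => T.toOpenPartialHomeomorph.symm (z.1.1.2 z.2, c)) := by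
    refine Filter.eventuallyEq_of_mem (prod_mem_nhds hNnhds hsnhds) ?_
    rintro ⟨p, u⟩ ⟨hpN, hu⟩
    exact hformula p hpN u hu
  refine ContinuousAt.congr ?_ hev.symm
  have hevcont : Continuous (fun z : PS q × ℝ≥0 => (z.1.1.2 z.2, c)) := by
    refine Continuous.prodMk ?_ continuous_const
    exact continuous_eval.comp ((hψcont.comp continuous_fst).prodMk continuous_snd)
  refine ContinuousAt.comp ?_ hevcont.continuousAt
  refine (T.toOpenPartialHomeomorph.continuousOn_symm.continuousAt (T.open_target.mem_nhds ?_))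
  exact T.mem_target.2 (hω s hs)


lemma continuous_L (hq : IsCoveringMap q) :
    Continuous (fun z : PS q × ℝ≥0 => H hq z.1 z.2) := by
  rw [continuous_iff_continuousAt]
  rintro ⟨p₀, t₀⟩
  set L := fun z : PS q × ℝ≥0 => H hq z.1 z.2 with hL
  set Sc : Set ℝ≥0 := {t | ∀ s ≤ t, ContinuousAt L (p₀, s)} with hSc
  suffices hmain : ∀ t₁ : ℝ≥0, t₁ ∈ Sc from hmain t₀ t₀ le_rfl
  have hpt : ∀ t : ℝ≥0, ContinuousAt L (p₀, t) →
      ContinuousAt (fun p : PS q => H hq p t) p₀ := by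
    intro t h
    have h2 : ContinuousAt (L ∘ fun p : PS q => (p, t)) p₀ :=
      ContinuousAt.comp (f := fun p : PS q => (p, t)) (x := p₀) h
        ((continuous_id.prodMk continuous_const).continuousAt)
    exact h2
  have down : ∀ {s t : ℝ≥0}, s ≤ t → t ∈ Sc → s ∈ Sc :=
    fun {s t} hst ht u hu => ht u (hu.trans hst)
  have zero_mem : (0:ℝ≥0) ∈ Sc := by
    intro s hs
    rw [le_zero_iff] at hs; subst hs
    haveI : DiscreteTopology (q ⁻¹' {p₀.1.2 0}) := (hq (p₀.1.2 0)).1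
    haveI : Nonempty (q ⁻¹' {p₀.1.2 0}) := ⟨⟨p₀.1.1, p₀.2⟩⟩
    set T := (hq (p₀.1.2 0)).toTrivialization with hT
    obtain ⟨δ, hδ, hδU⟩ := exists_delta p₀.1.2 0 T.open_baseSet
      (hq _).mem_toTrivialization_baseSet
    have hω : ∀ u ∈ Icc (0:ℝ≥0) δ, p₀.1.2 u ∈ T.baseSet := by
      intro u hu
      refine hδU u (by positivity) ?_
      have h2 : (u:ℝ) ≤ δ := by exact_mod_cast hu.2
      push_cast
      linarith
    have ha : ContinuousAt (fun p : PS q => H hq p 0) p₀ := by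
      have heq : (fun p : PS q => H hq p 0) = fun p : PS q => p.1.1 :=
        funext fun p => H_zero hq p
      rw [heq]
      exact ((continuous_fst.comp continuous_subtype_val)).continuousAt
    exact step hq T ((zero_le (a := δ))) p₀ hω ha 0 ⟨le_rfl, (zero_le (a := δ))⟩
      (Filter.mem_of_superset (Iio_mem_nhds hδ) (fun u hu => ⟨zero_le, le_of_lt hu⟩))
  intro t₁
  haveI : PreconnectedSpace (Icc (0:ℝ≥0) t₁) := Subtype.preconnectedSpace isPreconnected_Icc
  set S' : Set (Icc (0:ℝ≥0) t₁) := {u | (u : ℝ≥0) ∈ Sc} with hS'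
  have hopen : IsOpen S' := by
    rw [isOpen_iff_mem_nhds]
    rintro ⟨v, hv⟩ hvS
    haveI : DiscreteTopology (q ⁻¹' {p₀.1.2 v}) := (hq _).1
    haveI : Nonempty (q ⁻¹' {p₀.1.2 v}) := ⟨⟨H hq p₀ v, H_lift hq p₀ v⟩⟩
    set T := (hq (p₀.1.2 v)).toTrivialization with hT
    obtain ⟨δ, hδ, hδU⟩ := exists_delta p₀.1.2 v T.open_baseSet
      (hq _).mem_toTrivialization_baseSet
    have hω : ∀ u ∈ Icc v (v + δ), p₀.1.2 u ∈ T.baseSet := by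
      intro u hu
      have h1 : (v:ℝ) ≤ u := by exact_mod_cast hu.1
      have h2 : (u:ℝ) ≤ v + δ := by exact_mod_cast hu.2
      exact hδU u (by linarith [δ.coe_nonneg]) h2
    have hstep := step hq T le_self_add p₀ hω (hpt v (hvS v le_rfl))
    have hsub : ∀ w : ℝ≥0, w < v + δ → w ∈ Sc := by
      intro w hw u hu
      rcases le_or_gt u v with h | h
      · exact hvS u h
      · exact hstep u ⟨h.le, le_of_lt (lt_of_le_of_lt hu hw)⟩
          (Filter.mem_of_superset (Ioo_mem_nhds h (lt_of_le_of_lt hu hw)) Ioo_subset_Icc_self)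
    refine Filter.mem_of_superset
      (continuous_subtype_val.continuousAt.preimage_mem_nhds
        (Iio_mem_nhds (lt_add_of_pos_right v hδ))) ?_
    rintro ⟨w, hw⟩ hwmem
    exact hsub w hwmem
  have hclosed : IsClosed S' := by
    rw [← closure_subset_iff_isClosed]
    rintro ⟨v, hv⟩ hvcl
    haveI : DiscreteTopology (q ⁻¹' {p₀.1.2 v}) := (hq _).1
    haveI : Nonempty (q ⁻¹' {p₀.1.2 v}) := ⟨⟨H hq p₀ v, H_lift hq p₀ v⟩⟩
    set T := (hq (p₀.1.2 v)).toTrivialization with hT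
    obtain ⟨δ, hδ, hδU⟩ := exists_delta p₀.1.2 v T.open_baseSet
      (hq _).mem_toTrivialization_baseSet
    have hW : IsOpen {w : ℝ≥0 | (v:ℝ) - δ < w} := isOpen_lt continuous_const NNReal.continuous_coe
    have hWv : (⟨v, hv⟩ : Icc (0:ℝ≥0) t₁) ∈ Subtype.val ⁻¹' {w : ℝ≥0 | (v:ℝ) - δ < w} := by
      simp only [mem_preimage, mem_setOf_eq]
      have : (0:ℝ) < δ := by exact_mod_cast hδ
      linarith
    rw [mem_closure_iff_nhds] at hvcl
    obtain ⟨⟨s, hsIcc⟩, hs1, hs2⟩ := hvcl _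
      (continuous_subtype_val.continuousAt.preimage_mem_nhds (hW.mem_nhds hWv))
    simp only [mem_preimage, mem_setOf_eq] at hs1
    rcases le_total v s with hvs | hsv
    · exact down hvs hs2
    · have hω : ∀ u ∈ Icc s (v + δ), p₀.1.2 u ∈ T.baseSet := by
        intro u hu
        have h1 : (s:ℝ) ≤ u := by exact_mod_cast hu.1
        have h2 : (u:ℝ) ≤ v + δ := by exact_mod_cast hu.2
        exact hδU u (by linarith) h2
      have hstep := step hq T (hsv.trans le_self_add) p₀ hω (hpt s (hs2 s le_rfl))
      intro u hu
      rcases le_or_gt u s with h | h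
      · exact hs2 u h
      · refine hstep u ⟨h.le, hu.trans le_self_add⟩ ?_
        exact Filter.mem_of_superset
          (Ioo_mem_nhds h (lt_of_le_of_lt hu (lt_add_of_pos_right v hδ))) Ioo_subset_Icc_self
  have hne : S'.Nonempty := ⟨⟨0, ⟨le_rfl, zero_le⟩⟩, zero_mem⟩
  have huniv := IsClopen.eq_univ ⟨hclosed, hopen⟩ hne
  have ht : (⟨t₁, ⟨zero_le, le_rfl⟩⟩ : Icc (0:ℝ≥0) t₁) ∈ S' := by rw [huniv]; trivial
  exact ht

end Stmt11Aux

end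

open Stmt11Aux in

/-- For a covering map `q : E → B`, the map
`Φ : C([0,∞), E) → {(x, ω) : q x = ω 0}`, `Φ ω̃ = (ω̃ 0, q ∘ ω̃)`, is a
homeomorphism onto the subspace `{(x, ω) ∈ E × C([0,∞), B) : q x = ω 0}`
(with respect to the compact-open topologies); equivalently, unique path
lifting holds and the lifting map is a homeomorphism inverse to `Φ`. -/
theorem stmt11 {E B : Type*} [TopologicalSpace E] [TopologicalSpace B]
    (q : E → B) (hq : IsCoveringMap q) :
    ∃ Φ : C(ℝ≥0, E) ≃ₜ {p : E × C(ℝ≥0, B) // q p.1 = p.2 0},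
      ∀ ω : C(ℝ≥0, E),
        (Φ ω : E × C(ℝ≥0, B)) =
          (ω 0, ContinuousMap.comp ⟨q, hq.continuous⟩ ω) := by
  classical
  refine ⟨{ toFun := fun ω => ⟨(ω 0, ContinuousMap.comp ⟨q, hq.continuous⟩ ω), rfl⟩,
            invFun := H hq,
            left_inv := fun ω => ?_,
            right_inv := fun p => ?_,
            continuous_toFun := ?_,
            continuous_invFun := ?_ }, fun ω => rfl⟩
  · exact H_unique hq _ ω rfl (fun t => rfl)
  · refine Subtype.ext (Prod.ext ?_ ?_)
    · exact H_zero hq p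
    · exact ContinuousMap.ext fun t => H_lift hq p t
  · refine Continuous.subtype_mk ?_ _
    exact (continuous_eval_const 0).prodMk (ContinuousMap.continuous_postcomp _)
  · exact ContinuousMap.continuous_of_continuous_uncurry (H hq) (continuous_L hq)
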